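/- (Hierarchical peer-to-peer, graph level.) Let P1 and P2 be disjoint sets of vertices with c1 ∈ P1 and c2 ∈ P2, and let S = S(P1, P2, c1, c2) be the binary star graph. Let G' = S − (P2 \ {c2}) be obtained by deleting all vertices of P2 other than c2. Then τ_{c2}(G') − c2 is the complete graph on P1. -/

import Mathlib

open SimpleGraph

universe u

/-- Local complementation of `G` at vertex `i`: adjacency is toggled exactly among
pairs of neighbors of `i`. -/
def localComp {V : Type u} (G : SimpleGraph V) (i : V) : SimpleGraph V where
  Adj a b := a ≠ b ∧
    ((G.Adj i a ∧ G.Adj i b) ∧ ¬ G.Adj a b ∨ ¬(G.Adj i a ∧ G.Adj i b) ∧ G.Adj a b)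
  symm := ⟨by
    rintro a b ⟨hne, h⟩
    refine ⟨hne.symm, ?_⟩
    rcases h with ⟨⟨ha, hb⟩, hab⟩ | ⟨h1, h2⟩
    · exact Or.inl ⟨⟨hb, ha⟩, fun h => hab h.symm⟩
    · exact Or.inr ⟨fun h => h1 ⟨h.2, h.1⟩, h2.symm⟩⟩
  loopless := ⟨fun a h => h.1 rfl⟩

/-- Vertex deletion `G − i`: remove every edge incident to `i` (the vertex stays,
isolated). -/
def delVert {V : Type u} (G : SimpleGraph V) (i : V) : SimpleGraph V where
  Adj a b := G.Adj a b ∧ a ≠ i ∧ b ≠ i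
  symm := ⟨fun _ _ ⟨h, ha, hb⟩ => ⟨h.symm, hb, ha⟩⟩
  loopless := ⟨fun a h => G.irrefl h.1⟩

/-- Deletion of a set `Z` of vertices: remove every edge incident to a vertex of `Z`. -/
def delSet {V : Type u} (G : SimpleGraph V) (Z : Set V) : SimpleGraph V where
  Adj a b := G.Adj a b ∧ a ∉ Z ∧ b ∉ Z
  symm := ⟨fun _ _ ⟨h, ha, hb⟩ => ⟨h.symm, hb, ha⟩⟩
  loopless := ⟨fun a h => G.irrefl h.1⟩

/-- Star graph on the set `W` with center `c`: edges are exactly the pairs `{c, u}`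
for `u ∈ W \ {c}`. -/
def starGraph {V : Type u} (W : Set V) (c : V) : SimpleGraph V :=
  SimpleGraph.fromRel (fun a b => a = c ∧ b ∈ W \ {c})

/-- Complete graph on the set `A`: edges are exactly all pairs of distinct elements
of `A`. -/
def completeOn {V : Type u} (A : Set V) : SimpleGraph V :=
  SimpleGraph.fromRel (fun a b => a ∈ A ∧ b ∈ A)

/-- Complete bipartite graph on parts `A` and `B`: edges are exactly the pairs
`{a, b}` with `a ∈ A` and `b ∈ B`. -/
def completeBipartiteOn {V : Type u} (A B : Set V) : SimpleGraph V :=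
  SimpleGraph.fromRel (fun a b => a ∈ A ∧ b ∈ B)

/-- Binary star graph `S(P1, P2, c1, c2)`: edges are exactly the pairs `{c1, u}`
with `u ∈ P2` together with the pairs `{u, c2}` with `u ∈ P1`. -/
def binaryStar {V : Type u} (P1 P2 : Set V) (c1 c2 : V) : SimpleGraph V :=
  SimpleGraph.fromRel (fun a b => (a = c1 ∧ b ∈ P2) ∨ (a ∈ P1 ∧ b = c2))

/-- The graph with the single edge `{c1, c2}`. -/
def singleEdge {V : Type u} (c1 c2 : V) : SimpleGraph V :=
  SimpleGraph.fromRel (fun a b => a = c1 ∧ b = c2)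

/-- Hierarchical peer-to-peer, graph level:
with `G' = S − (P2 \ {c2})`, `τ_{c2}(G') − c2` is the complete graph on `P1`. -/
theorem stmt_6 {V : Type u} (P1 P2 : Set V) (hdisj : Disjoint P1 P2)
    (c1 c2 : V) (hc1 : c1 ∈ P1) (hc2 : c2 ∈ P2) :
    delVert (localComp (delSet (binaryStar P1 P2 c1 c2) (P2 \ {c2})) c2) c2 =
      completeOn P1 := by
  have hP1 : ∀ x, x ∈ P1 → x ∉ P2 := fun x hx hx2 => hdisj.ne_of_mem hx hx2 rfl
  have hc2P1 : c2 ∉ P1 := fun h => hP1 c2 h hc2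
  have hG' : ∀ x y, (delSet (binaryStar P1 P2 c1 c2) (P2 \ {c2})).Adj x y ↔
      (x ≠ y ∧ ((x ∈ P1 ∧ y = c2) ∨ (y ∈ P1 ∧ x = c2))) := by
    intro x y
    simp only [delSet, binaryStar, SimpleGraph.fromRel_adj, Set.mem_diff,
      Set.mem_singleton_iff]
    constructor
    · rintro ⟨⟨hne, h⟩, hx, hy⟩
      refine ⟨hne, ?_⟩
      rcases h with (⟨rfl, hy2⟩ | ⟨hx1, rfl⟩) | (⟨rfl, hx2⟩ | ⟨hy1, rfl⟩)
      · left; exact ⟨hc1, by_contra fun hyc => hy ⟨hy2, hyc⟩⟩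
      · left; exact ⟨hx1, rfl⟩
      · right; exact ⟨hc1, by_contra fun hxc => hx ⟨hx2, hxc⟩⟩
      · right; exact ⟨hy1, rfl⟩
    · rintro ⟨hne, ⟨hx1, rfl⟩ | ⟨hy1, rfl⟩⟩
      · exact ⟨⟨hne, Or.inl (Or.inr ⟨hx1, rfl⟩)⟩, fun h => hP1 x hx1 h.1, fun h => h.2 rfl⟩
      · exact ⟨⟨hne, Or.inr (Or.inr ⟨hy1, rfl⟩)⟩, fun h => h.2 rfl, fun h => hP1 y hy1 h.1⟩
  have hrfl : c2 = c2 := rfl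
  ext a b
  simp only [delVert, localComp, completeOn, SimpleGraph.fromRel_adj, hG']
  constructor
  · rintro ⟨⟨hne, h⟩, ha2, hb2⟩
    refine ⟨hne, ?_⟩
    tauto
  · rintro ⟨hne, hab⟩
    have haP1 : a ∈ P1 := by tauto
    have hbP1 : b ∈ P1 := by tauto
    have ha2 : a ≠ c2 := fun h => hc2P1 (h ▸ haP1)
    have hb2 : b ≠ c2 := fun h => hc2P1 (h ▸ hbP1)
    refine ⟨⟨hne, ?_⟩, ha2, hb2⟩
    tauto
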